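/- Let M ≠ 0 be a symmetric n×n real matrix with positive/negative part decomposition M = M₊ − M₋ (M₊, M₋ ⪰ 0, M₊M₋ = 0). Then the optimal value of the problem: minimize tr(V) over α ∈ R and symmetric matrices U, V ⪰ 0 subject to tr(U) = 1 and αM = U − V, equals min{ tr(M₋)/tr(M₊), tr(M₊)/tr(M₋) } (with the convention that a ratio with zero denominator is interpreted as the other ratio, i.e., if M ⪰ 0 or M ⪯ 0 the optimum is 0). -/

import Mathlib

open Matrix

section helpers

variable {n : ℕ}

private lemma psd_trace_nonneg {A : Matrix (Fin n) (Fin n) ℝ} (hA : A.PosSemidef) :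
    0 ≤ A.trace := by
  rw [Matrix.trace]
  apply Finset.sum_nonneg
  intro i _
  exact hA.diag_nonneg

open scoped MatrixOrder Matrix.Norms.L2Operator in
private lemma psd_exists_mul {A : Matrix (Fin n) (Fin n) ℝ} (hA : A.PosSemidef) :
    ∃ B : Matrix (Fin n) (Fin n) ℝ, A = Bᴴ * B := by
  obtain ⟨y, hy⟩ := CStarAlgebra.nonneg_iff_eq_star_mul_self.mp hA.nonneg
  exact ⟨y, hy⟩

private lemma psd_trace_mul_nonneg {A B : Matrix (Fin n) (Fin n) ℝ}
    (hA : A.PosSemidef) (hB : B.PosSemidef) : 0 ≤ (A * B).trace := by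
  obtain ⟨C, rfl⟩ := psd_exists_mul hB
  have h2 : (A * (Cᴴ * C)).trace = (C * A * Cᴴ).trace := by
    rw [← Matrix.mul_assoc, trace_mul_comm, Matrix.mul_assoc]
  rw [h2]
  exact psd_trace_nonneg (hA.mul_mul_conjTranspose_same C)

private lemma psd_trace_pos {A : Matrix (Fin n) (Fin n) ℝ} (hA : A.PosSemidef)
    (h : A ≠ 0) : 0 < A.trace := by
  rcases (psd_trace_nonneg hA).lt_or_eq with h' | h'
  · exact h'
  exfalso
  apply h
  obtain ⟨B, hB⟩ := psd_exists_mul hA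
  have htr : (Bᴴ * B).trace = ∑ j, ∑ i, B i j * B i j := by
    simp [Matrix.trace, Matrix.mul_apply, Matrix.conjTranspose_apply, Matrix.diag]
  have hzero : ∑ j, ∑ i, B i j * B i j = 0 := by
    rw [← htr, ← hB, ← h']
  have hBz : B = 0 := by
    ext i j
    have h1 : ∀ j ∈ Finset.univ, (0:ℝ) ≤ ∑ i, B i j * B i j := fun j _ =>
      Finset.sum_nonneg fun i _ => mul_self_nonneg _
    have h2 := (Finset.sum_eq_zero_iff_of_nonneg h1).mp hzero j (Finset.mem_univ j)
    have h3 := (Finset.sum_eq_zero_iff_of_nonneg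
      (fun i _ => mul_self_nonneg (B i j))).mp h2 i (Finset.mem_univ i)
    simpa [mul_self_eq_zero] using h3
  rw [hB, hBz]
  simp

private lemma psd_smul {A : Matrix (Fin n) (Fin n) ℝ} (hA : A.PosSemidef)
    {c : ℝ} (hc : 0 ≤ c) : (c • A).PosSemidef := by
  constructor
  · show (c • A)ᴴ = c • A
    rw [conjTranspose_smul, hA.1.eq]
    congr 1
  · exact (hA.smul hc).2

/-- projection onto the range of a PSD matrix `A`, killing any `B` with `A * B = 0` -/
private lemma exists_projection {A B : Matrix (Fin n) (Fin n) ℝ}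
    (hA : A.PosSemidef) (hAB : A * B = 0) :
    ∃ P : Matrix (Fin n) (Fin n) ℝ, P.PosSemidef ∧ (1 - P).PosSemidef ∧
      P * A = A ∧ P * B = 0 := by
  have hH : A.IsHermitian := hA.1
  set W : Matrix (Fin n) (Fin n) ℝ := (hH.eigenvectorUnitary : Matrix (Fin n) (Fin n) ℝ) with hW
  have hWmem : W ∈ Matrix.unitaryGroup (Fin n) ℝ := hH.eigenvectorUnitary.2
  have hWW : W * star W = 1 := (Matrix.mem_unitaryGroup_iff).mp hWmem
  have hWW' : star W * W = 1 := (Matrix.mem_unitaryGroup_iff').mp hWmem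
  set lam : Fin n → ℝ := hH.eigenvalues with hlam
  set e : Fin n → ℝ := fun i => if lam i = 0 then 0 else 1 with he
  set P : Matrix (Fin n) (Fin n) ℝ := W * diagonal e * star W with hP
  have hspec : A = W * diagonal (RCLike.ofReal ∘ lam) * star W := hH.spectral_theorem
  have hdiag : diagonal (RCLike.ofReal ∘ lam) = diagonal lam := by
    congr 1
  have hspec' : A = W * diagonal lam * star W := by rw [hspec, hdiag]
  have hcan : ∀ X : Matrix (Fin n) (Fin n) ℝ, star W * (W * X) = X := by
    intro X; rw [← Matrix.mul_assoc, hWW', Matrix.one_mul]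
  have hcan' : ∀ X : Matrix (Fin n) (Fin n) ℝ, W * (star W * X) = X := by
    intro X; rw [← Matrix.mul_assoc, hWW, Matrix.one_mul]
  refine ⟨P, ?_, ?_, ?_, ?_⟩
  · rw [hP, Matrix.star_eq_conjTranspose]
    exact (Matrix.PosSemidef.diagonal (fun i => by
      by_cases h : lam i = 0 <;> simp [he, h])).mul_mul_conjTranspose_same W
  · have h1 : (1 : Matrix (Fin n) (Fin n) ℝ) - P = W * diagonal (fun i => 1 - e i) * star W := by
      have : diagonal (fun i => 1 - e i) = 1 - diagonal e := by
        rw [← diagonal_one, diagonal_sub]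
      rw [this, hP]
      rw [Matrix.mul_sub, Matrix.sub_mul, Matrix.mul_one, hWW]
    rw [h1, Matrix.star_eq_conjTranspose]
    exact (Matrix.PosSemidef.diagonal (fun i => by
      by_cases h : lam i = 0 <;> simp [he, h])).mul_mul_conjTranspose_same W
  · have hfun : (fun i => e i * lam i) = lam := by
      funext i
      by_cases h : lam i = 0 <;> simp [he, h]
    have hee : diagonal e * diagonal lam = diagonal lam := by
      rw [diagonal_mul_diagonal, hfun]
    rw [hP]
    conv_lhs => rw [hspec']
    simp only [Matrix.mul_assoc]
    rw [hcan, ← Matrix.mul_assoc (diagonal e), hee]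
    rw [hspec', Matrix.mul_assoc]
  · set N : Matrix (Fin n) (Fin n) ℝ := star W * B * W with hN
    have hBN : B = W * N * star W := by
      rw [hN, ← Matrix.mul_assoc, ← Matrix.mul_assoc, hWW, Matrix.one_mul,
        Matrix.mul_assoc, hWW, Matrix.mul_one]
    have hDN : diagonal lam * N = 0 := by
      have h0 : star W * (A * B) * W = 0 := by rw [hAB]; simp
      have : star W * (A * B) * W = diagonal lam * N := by
        conv_lhs => rw [hspec']
        rw [hN]
        simp only [Matrix.mul_assoc]
        rw [hcan]
      rw [← this, h0]
    have hEN : diagonal e * N = 0 := by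
      ext i j
      have h1 : (diagonal lam * N) i j = lam i * N i j := by
        rw [diagonal_mul]
      have h2 : (diagonal lam * N) i j = 0 := by rw [hDN]; rfl
      rw [diagonal_mul]
      by_cases h : lam i = 0
      · simp [he, h]
      · have : N i j = 0 := by
          have := h1.symm.trans h2
          exact (mul_eq_zero.mp this).resolve_left h
        simp [he, this]
    have : P * B = W * (diagonal e * N) * star W := by
      rw [hP, hBN]
      simp only [Matrix.mul_assoc]
      rw [hcan]
    rw [this, hEN]
    simp

end helpers

theorem sdp_optimal_value {n : ℕ} (M Mp Mn : Matrix (Fin n) (Fin n) ℝ)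
    (hM : M ≠ 0)
    (hMp : Mp.PosSemidef) (hMn : Mn.PosSemidef)
    (hsplit : M = Mp - Mn) (horth : Mp * Mn = 0) :
    sInf {t : ℝ | ∃ (α : ℝ) (U V : Matrix (Fin n) (Fin n) ℝ),
        U.PosSemidef ∧ V.PosSemidef ∧ U.trace = 1 ∧ α • M = U - V ∧ t = V.trace}
      = min (Mn.trace / Mp.trace) (Mp.trace / Mn.trace) := by
  set S := {t : ℝ | ∃ (α : ℝ) (U V : Matrix (Fin n) (Fin n) ℝ),
        U.PosSemidef ∧ V.PosSemidef ∧ U.trace = 1 ∧ α • M = U - V ∧ t = V.trace} with hS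
  have hMnMp : Mn * Mp = 0 := by
    have h := congrArg Matrix.conjTranspose horth
    rwa [conjTranspose_mul, hMn.1.eq, hMp.1.eq, conjTranspose_zero] at h
  obtain ⟨P, hPpsd, hP1, hPMp, hPMn⟩ := exists_projection hMp horth
  obtain ⟨Q, hQpsd, hQ1, hQMn, hQMp⟩ := exists_projection hMn hMnMp
  set p := Mp.trace with hpdef
  set q := Mn.trace with hqdef
  have hp : 0 ≤ p := psd_trace_nonneg hMp
  have hq : 0 ≤ q := psd_trace_nonneg hMn
  have hpq : 0 < p ∨ 0 < q := by
    by_contra h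
    push_neg at h
    have hMp0 : Mp = 0 := by
      by_contra h'
      exact absurd (psd_trace_pos hMp h') (not_lt.mpr h.1)
    have hMn0 : Mn = 0 := by
      by_contra h'
      exact absurd (psd_trace_pos hMn h') (not_lt.mpr h.2)
    exact hM (by rw [hsplit, hMp0, hMn0, sub_zero])
  -- lower bound for every element of S
  have key : ∀ t ∈ S, min (q / p) (p / q) ≤ t := by
    rintro t ⟨α, U, V, hU, hV, htrU, heq, rfl⟩
    have hV0 : 0 ≤ V.trace := psd_trace_nonneg hV
    have hMtr : M.trace = p - q := by rw [hsplit, trace_sub]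
    have e1 : α * (p - q) = 1 - V.trace := by
      have h := congrArg Matrix.trace heq
      rw [trace_smul, trace_sub, hMtr, htrU, smul_eq_mul] at h
      exact h
    -- facts from projection P
    have hPeq : α • Mp = P * U - P * V := by
      have h := congrArg (fun X => P * X) heq
      simp only [Matrix.mul_sub, Matrix.mul_smul] at h
      rw [hsplit, Matrix.mul_sub, hPMp, hPMn, sub_zero] at h
      exact h
    have e2 : α * p = (P * U).trace - (P * V).trace := by
      have h := congrArg Matrix.trace hPeq
      rw [trace_smul, trace_sub, smul_eq_mul] at h
      exact h
    have hPU0 : 0 ≤ (P * U).trace := psd_trace_mul_nonneg hPpsd hU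
    have hPV0 : 0 ≤ (P * V).trace := psd_trace_mul_nonneg hPpsd hV
    have hPU1 : (P * U).trace ≤ 1 := by
      have h := psd_trace_mul_nonneg hP1 hU
      rw [Matrix.sub_mul, Matrix.one_mul, trace_sub] at h
      linarith
    have hPVle : (P * V).trace ≤ V.trace := by
      have h := psd_trace_mul_nonneg hP1 hV
      rw [Matrix.sub_mul, Matrix.one_mul, trace_sub] at h
      linarith
    -- facts from projection Q
    have hQeq : (-α) • Mn = Q * U - Q * V := by
      have h := congrArg (fun X => Q * X) heq
      simp only [Matrix.mul_sub, Matrix.mul_smul] at h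
      rw [hsplit, Matrix.mul_sub, hQMp, hQMn, zero_sub, smul_neg, ← neg_smul] at h
      exact h
    have e3 : (-α) * q = (Q * U).trace - (Q * V).trace := by
      have h := congrArg Matrix.trace hQeq
      rw [trace_smul, trace_sub, smul_eq_mul] at h
      exact h
    have hQU0 : 0 ≤ (Q * U).trace := psd_trace_mul_nonneg hQpsd hU
    have hQV0 : 0 ≤ (Q * V).trace := psd_trace_mul_nonneg hQpsd hV
    have hQU1 : (Q * U).trace ≤ 1 := by
      have h := psd_trace_mul_nonneg hQ1 hU
      rw [Matrix.sub_mul, Matrix.one_mul, trace_sub] at h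
      linarith
    have hQVle : (Q * V).trace ≤ V.trace := by
      have h := psd_trace_mul_nonneg hQ1 hV
      rw [Matrix.sub_mul, Matrix.one_mul, trace_sub] at h
      linarith
    rcases eq_or_lt_of_le hp with hp0 | hp0
    · rw [← hp0]
      simp only [div_zero, zero_div, min_self]
      exact hV0
    rcases eq_or_lt_of_le hq with hq0 | hq0
    · rw [← hq0]
      simp only [div_zero, zero_div, min_self]
      exact hV0
    have h2 : α * p ≤ 1 := by linarith
    have h3 : (-α) * q ≤ 1 := by linarith
    rcases le_total q p with hle | hle
    · have hmin : min (q / p) (p / q) = q / p :=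
        min_eq_left (by rw [div_le_div_iff₀ hp0 hq0]; nlinarith)
      rw [hmin, div_le_iff₀ hp0]
      have e1p : α * (p - q) * p = (1 - V.trace) * p := by rw [e1]
      nlinarith [mul_le_mul_of_nonneg_right h2 (sub_nonneg.2 hle)]
    · have hmin : min (q / p) (p / q) = p / q :=
        min_eq_right (by rw [div_le_div_iff₀ hq0 hp0]; nlinarith)
      rw [hmin, div_le_iff₀ hq0]
      have e1q : α * (p - q) * q = (1 - V.trace) * q := by rw [e1]
      nlinarith [mul_le_mul_of_nonneg_right h3 (sub_nonneg.2 hle)]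
  have hbdd : BddBelow S := by
    refine ⟨0, ?_⟩
    rintro t ⟨α, U, V, hU, hV, htrU, heq, rfl⟩
    exact psd_trace_nonneg hV
  have hmem1 : 0 < p → q / p ∈ S := by
    intro hp0
    refine ⟨p⁻¹, p⁻¹ • Mp, p⁻¹ • Mn, psd_smul hMp (inv_nonneg.mpr hp),
      psd_smul hMn (inv_nonneg.mpr hp), ?_, ?_, ?_⟩
    · rw [trace_smul, smul_eq_mul, ← hpdef, inv_mul_cancel₀ hp0.ne']
    · rw [hsplit, smul_sub]
    · rw [trace_smul, smul_eq_mul, ← hqdef, inv_mul_eq_div]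
  have hmem2 : 0 < q → p / q ∈ S := by
    intro hq0
    refine ⟨-q⁻¹, q⁻¹ • Mn, q⁻¹ • Mp, psd_smul hMn (inv_nonneg.mpr hq),
      psd_smul hMp (inv_nonneg.mpr hq), ?_, ?_, ?_⟩
    · rw [trace_smul, smul_eq_mul, ← hqdef, inv_mul_cancel₀ hq0.ne']
    · rw [hsplit, smul_sub, neg_smul, neg_smul, sub_neg_eq_add, neg_add_eq_sub]
    · rw [trace_smul, smul_eq_mul, ← hpdef, inv_mul_eq_div]
  have hne : S.Nonempty := by
    rcases hpq with h | h
    · exact ⟨_, hmem1 h⟩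
    · exact ⟨_, hmem2 h⟩
  refine le_antisymm ?_ (le_csInf hne key)
  rcases le_or_gt q p with hle | hlt
  · have hp0 : 0 < p := by
      rcases hpq with h | h
      · exact h
      · exact lt_of_lt_of_le h hle
    have hmin : min (q / p) (p / q) = q / p := by
      rcases eq_or_lt_of_le hq with hq0 | hq0
      · rw [← hq0]
        simp
      · exact min_eq_left (by rw [div_le_div_iff₀ hp0 hq0]; nlinarith)
    rw [hmin]
    exact csInf_le hbdd (hmem1 hp0)
  · have hq0 : 0 < q := by
      rcases hpq with h | h
      · exact lt_trans h hlt
      · exact h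
    have hmin : min (q / p) (p / q) = p / q := by
      rcases eq_or_lt_of_le hp with hp0 | hp0
      · rw [← hp0]
        simp
      · exact min_eq_right (by rw [div_le_div_iff₀ hq0 hp0]; nlinarith)
    rw [hmin]
    exact csInf_le hbdd (hmem2 hq0)
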